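/- With the notation of the previous context (a ≥ 0, ε > 0, n ≠ 0), the time derivative satisfies |Ḣ_n(t)| ≤ 1 for all t ≥ 0, where Ḣ_n(t) = e^{-h_n t} cosh(ω_n t) - h_n H_n(t). -/

import Mathlib

/-- `h_n = (a + ε n²)/2`. -/
noncomputable def hcoef (a ε : ℝ) (n : ℤ) : ℝ := (a + ε * (n : ℝ) ^ 2) / 2

/-- The real-valued fundamental oscillator solution `H_n(t)`:
`e^{-h t} sinh(ω t)/ω` when `ω² = h² - n² > 0`,
`e^{-h t} sin(|ω| t)/|ω|` when `h² - n² < 0`, and `t e^{-h t}` when `h² = n²`. -/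
noncomputable def Hfun (a ε : ℝ) (n : ℤ) (t : ℝ) : ℝ :=
  if 0 < (hcoef a ε n) ^ 2 - (n : ℝ) ^ 2 then
    Real.exp (-(hcoef a ε n) * t) *
      Real.sinh (Real.sqrt ((hcoef a ε n) ^ 2 - (n : ℝ) ^ 2) * t) /
      Real.sqrt ((hcoef a ε n) ^ 2 - (n : ℝ) ^ 2)
  else if (hcoef a ε n) ^ 2 - (n : ℝ) ^ 2 < 0 then
    Real.exp (-(hcoef a ε n) * t) *
      Real.sin (Real.sqrt ((n : ℝ) ^ 2 - (hcoef a ε n) ^ 2) * t) /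
      Real.sqrt ((n : ℝ) ^ 2 - (hcoef a ε n) ^ 2)
  else Real.exp (-(hcoef a ε n) * t) * t

/-- `n̄ = 1 + ⌊2/ε⌋`. -/
noncomputable def nbar (ε : ℝ) : ℤ := 1 + ⌊(2 : ℝ) / ε⌋


lemma energy_key (h nn : ℝ) (hh : 0 ≤ h) (hnn : 0 ≤ nn) (H H' : ℝ → ℝ)
    (hd : ∀ s, HasDerivAt H (H' s) s)
    (hd2 : ∀ s, HasDerivAt H' (-(2*h) * H' s - nn * H s) s)
    (h0 : H 0 = 0) (h1 : H' 0 = 1) (t : ℝ) (ht : 0 ≤ t) :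
    |H' t| ≤ 1 := by
  set E : ℝ → ℝ := fun s => (H' s)^2 + nn * (H s)^2 with hE
  have hdE : ∀ s, HasDerivAt E (-(4*h) * (H' s)^2) s := by
    intro s
    have := ((hd2 s).pow 2).add (((hd s).pow 2).const_mul nn)
    refine this.congr_deriv (Eq.symm ?_)
    ring
  have hanti : AntitoneOn E (Set.Ici (0:ℝ)) := by
    apply antitoneOn_of_deriv_nonpos (convex_Ici 0)
    · exact fun x _ => ((hdE x).continuousAt).continuousWithinAt
    · exact fun x _ => (hdE x).differentiableAt.differentiableWithinAt
    · intro x _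
      rw [(hdE x).deriv]
      nlinarith [sq_nonneg (H' x)]
  have hEt : E t ≤ E 0 := hanti (Set.self_mem_Ici) ht ht
  simp only [hE, h0, h1] at hEt
  norm_num at hEt
  have : (H' t)^2 ≤ 1 := by nlinarith [mul_nonneg hnn (sq_nonneg (H t)), hEt]
  exact abs_le_one_iff_mul_self_le_one.mpr (by nlinarith)

lemma expd (h t : ℝ) : HasDerivAt (fun s : ℝ => Real.exp (-h*s)) (Real.exp (-h*t) * (-h*1)) t :=
  ((hasDerivAt_id t).const_mul (-h)).exp

theorem stmt4 (a ε : ℝ) (ha : 0 ≤ a) (hε : 0 < ε) (n : ℤ) (hn : n ≠ 0)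
    (t : ℝ) (ht : 0 ≤ t) : |deriv (Hfun a ε n) t| ≤ 1 := by
  set h := hcoef a ε n with hh
  have hnn : (0:ℝ) < (n:ℝ)^2 := by positivity
  have hhpos : 0 < h := by
    rw [hh, hcoef]
    nlinarith
  set nn := ((n:ℝ))^2 with hnn'
  rcases lt_trichotomy (h^2 - nn) 0 with hD | hD | hD
  · -- underdamped: sin case
    set ω := Real.sqrt (nn - h^2) with hω
    have hω2 : ω^2 = nn - h^2 := Real.sq_sqrt (by linarith)
    have hωpos : 0 < ω := Real.sqrt_pos.mpr (by linarith)
    set H : ℝ → ℝ := fun s => Real.exp (-h*s) * Real.sin (ω*s) / ω with hH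
    set H' : ℝ → ℝ := fun s => Real.exp (-h*s) * Real.cos (ω*s) - h * (Real.exp (-h*s) * Real.sin (ω*s) / ω) with hH'
    have hfe : Hfun a ε n = H := by
      funext s
      simp only [Hfun, ← hh, ← hnn', if_neg (by linarith : ¬ 0 < h^2 - nn), if_pos hD, hH, ← hω]
    have hd : ∀ s, HasDerivAt H (H' s) s := by
      intro s
      have s1 : HasDerivAt (fun u : ℝ => Real.sin (ω*u)) (Real.cos (ω*s) * (ω*1)) s :=
        (Real.hasDerivAt_sin (ω*s)).comp s ((hasDerivAt_id s).const_mul ω)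
      have := ((expd h s).mul s1).div_const ω
      refine this.congr_deriv (Eq.symm ?_)
      simp only [hH', neg_mul]
      field_simp
      ring
    have hd2 : ∀ s, HasDerivAt H' (-(2*h) * H' s - nn * H s) s := by
      intro s
      have s1 : HasDerivAt (fun u : ℝ => Real.sin (ω*u)) (Real.cos (ω*s) * (ω*1)) s :=
        (Real.hasDerivAt_sin (ω*s)).comp s ((hasDerivAt_id s).const_mul ω)
      have c1 : HasDerivAt (fun u : ℝ => Real.cos (ω*u)) (-Real.sin (ω*s) * (ω*1)) s :=
        (Real.hasDerivAt_cos (ω*s)).comp s ((hasDerivAt_id s).const_mul ω)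
      have := ((expd h s).mul c1).sub ((((expd h s).mul s1).div_const ω).const_mul h)
      refine this.congr_deriv (Eq.symm ?_)
      simp only [hH', hH, neg_mul]
      field_simp
      linear_combination (Real.sin (s*ω)) * hω2
    rw [hfe, (hd t).deriv]
    exact energy_key h nn hhpos.le hnn.le H H' hd hd2 (by simp [hH]) (by simp [hH']) t ht
  · -- critical case
    set H : ℝ → ℝ := fun s => Real.exp (-h*s) * s with hH
    set H' : ℝ → ℝ := fun s => Real.exp (-h*s) - h * (Real.exp (-h*s) * s) with hH'
    have hfe : Hfun a ε n = H := by
      funext s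
      simp only [Hfun, ← hh, ← hnn', if_neg (by linarith : ¬ 0 < h^2 - nn),
        if_neg (by linarith : ¬ h^2 - nn < 0), hH]
    have hd : ∀ s, HasDerivAt H (H' s) s := by
      intro s
      have := (expd h s).mul (hasDerivAt_id s)
      refine this.congr_deriv (Eq.symm ?_)
      simp only [hH', id_eq, neg_mul]
      ring
    have hd2 : ∀ s, HasDerivAt H' (-(2*h) * H' s - nn * H s) s := by
      intro s
      have := (expd h s).sub (((expd h s).mul (hasDerivAt_id s)).const_mul h)
      refine this.congr_deriv (Eq.symm ?_)
      simp only [hH', hH, id_eq, neg_mul]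
      linear_combination (Real.exp (-(h*s)) * s) * hD
    rw [hfe, (hd t).deriv]
    exact energy_key h nn hhpos.le hnn.le H H' hd hd2 (by simp [hH]) (by simp [hH']) t ht
  · -- overdamped: sinh case
    set ω := Real.sqrt (h^2 - nn) with hω
    have hω2 : ω^2 = h^2 - nn := Real.sq_sqrt (by linarith)
    have hωpos : 0 < ω := Real.sqrt_pos.mpr (by linarith)
    set H : ℝ → ℝ := fun s => Real.exp (-h*s) * Real.sinh (ω*s) / ω with hH
    set H' : ℝ → ℝ := fun s => Real.exp (-h*s) * Real.cosh (ω*s) - h * (Real.exp (-h*s) * Real.sinh (ω*s) / ω) with hH'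
    have hfe : Hfun a ε n = H := by
      funext s
      simp only [Hfun, ← hh, ← hnn', if_pos hD, hH, ← hω]
    have hd : ∀ s, HasDerivAt H (H' s) s := by
      intro s
      have s1 : HasDerivAt (fun u : ℝ => Real.sinh (ω*u)) (Real.cosh (ω*s) * (ω*1)) s :=
        (Real.hasDerivAt_sinh (ω*s)).comp s ((hasDerivAt_id s).const_mul ω)
      have := ((expd h s).mul s1).div_const ω
      refine this.congr_deriv (Eq.symm ?_)
      simp only [hH', neg_mul]
      field_simp
      ring
    have hd2 : ∀ s, HasDerivAt H' (-(2*h) * H' s - nn * H s) s := by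
      intro s
      have s1 : HasDerivAt (fun u : ℝ => Real.sinh (ω*u)) (Real.cosh (ω*s) * (ω*1)) s :=
        (Real.hasDerivAt_sinh (ω*s)).comp s ((hasDerivAt_id s).const_mul ω)
      have c1 : HasDerivAt (fun u : ℝ => Real.cosh (ω*u)) (Real.sinh (ω*s) * (ω*1)) s :=
        (Real.hasDerivAt_cosh (ω*s)).comp s ((hasDerivAt_id s).const_mul ω)
      have := ((expd h s).mul c1).sub ((((expd h s).mul s1).div_const ω).const_mul h)
      refine this.congr_deriv (Eq.symm ?_)
      simp only [hH', hH, neg_mul]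
      field_simp
      linear_combination (-Real.sinh (s*ω)) * hω2
    rw [hfe, (hd t).deriv]
    exact energy_key h nn hhpos.le hnn.le H H' hd hd2 (by simp [hH]) (by simp [hH']) t ht
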